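/- Let ρ_n be the symmetric state P_S(P_{Φ00}^{⊗n₁} ⊗ P_{Φ01}^{⊗n₂} ⊗ P_{Φ10}^{⊗n₃} ⊗ P_{Φ11}^{⊗n₄}) on n = n₁+n₂+n₃+n₄ qubit pairs (uniform average over permutations of the pairs), and let σ be the Bell-diagonal two-qubit state with eigenvalues nᵢ/n. Then σ^{⊗n} = p ρ_n + (1−p) ρ̃_n where p = multinomial(n; n₁,n₂,n₃,n₄) · Π_i (nᵢ/n)^{nᵢ} and ρ̃_n is a positive semidefinite operator of trace 1. Moreover p ≥ 1/(n+1)³ (in particular p ≥ 1/n³ for n ≥ 2, and the weaker bound p ≥ 1/n^O(1) holds). -/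
import Mathlib


open Matrix

/-- The type (frequency vector) of a string `w` of `n` Bell labels. -/
def typeOf {n : ℕ} (w : Fin n → Fin 4) : Fin 4 → ℕ :=
  fun i => (Finset.univ.filter fun j => w j = i).card

/-- The symmetrized state `ρ_n = P_S(P_{Φ00}^{⊗n₁} ⊗ ⋯ ⊗ P_{Φ11}^{⊗n₄})`, written in the
Bell basis: the uniform mixture of the projectors onto all Bell-basis strings of type
`c = (n₁,…,n₄)`; each such string carries weight `(∏ᵢ nᵢ!)/n!`. -/
noncomputable def rhoSym (n : ℕ) (c : Fin 4 → ℕ) :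
    Matrix (Fin n → Fin 4) (Fin n → Fin 4) ℝ :=
  Matrix.diagonal fun w =>
    if typeOf w = c then ((∏ i, (c i).factorial : ℕ) : ℝ) / (n.factorial : ℝ) else 0

/-- The i.i.d. state `σ^{⊗n}` in the Bell basis, where `σ` is Bell-diagonal with
eigenvalues `nᵢ/n`. -/
noncomputable def sigmaPow (n : ℕ) (c : Fin 4 → ℕ) :
    Matrix (Fin n → Fin 4) (Fin n → Fin 4) ℝ :=
  Matrix.diagonal fun w => ∏ j, ((c (w j) : ℝ) / (n : ℝ))

lemma fact_le_pow_add (b k : ℕ) : (b + k).factorial ≤ b.factorial * (b + k) ^ k := by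
  induction k with
  | zero => simp
  | succ k ih =>
    have h1 : (b + (k+1)).factorial = (b + k + 1) * (b + k).factorial := by
      rw [← Nat.add_assoc, Nat.factorial_succ]
    rw [h1]
    calc (b + k + 1) * (b + k).factorial
        ≤ (b + k + 1) * (b.factorial * (b + k) ^ k) := Nat.mul_le_mul_left _ ih
      _ ≤ (b + k + 1) * (b.factorial * (b + k + 1) ^ k) := by
          exact Nat.mul_le_mul_left _ (Nat.mul_le_mul_left _ (Nat.pow_le_pow_left (by omega) k))
      _ = b.factorial * (b + (k+1)) ^ (k+1) := by ring

lemma pow_mul_fact_le (a k : ℕ) : a.factorial * a ^ k ≤ (a + k).factorial := by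
  induction k with
  | zero => simp
  | succ k ih =>
    have h1 : a.factorial * a ^ (k+1) = a * (a.factorial * a ^ k) := by ring
    rw [h1]
    calc a * (a.factorial * a ^ k) ≤ a * (a + k).factorial := Nat.mul_le_mul_left _ ih
      _ ≤ (a + k + 1) * (a + k).factorial := Nat.mul_le_mul_right _ (by omega)
      _ = (a + (k+1)).factorial := by rw [← Nat.add_assoc, Nat.factorial_succ]

lemma fact_pow_le (a b : ℕ) : a.factorial * a ^ b ≤ b.factorial * a ^ a := by
  rcases le_total a b with h | h
  · obtain ⟨k, rfl⟩ := Nat.exists_eq_add_of_le h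
    calc a.factorial * a ^ (a + k) = (a.factorial * a ^ k) * a ^ a := by ring
      _ ≤ (a + k).factorial * a ^ a := Nat.mul_le_mul_right _ (pow_mul_fact_le a k)
  · obtain ⟨k, rfl⟩ := Nat.exists_eq_add_of_le h
    calc (b + k).factorial * (b + k) ^ b
        ≤ (b.factorial * (b + k) ^ k) * (b + k) ^ b := Nat.mul_le_mul_right _ (fact_le_pow_add b k)
      _ = b.factorial * (b + k) ^ (b + k) := by rw [mul_assoc, ← pow_add, Nat.add_comm k b]

-- choose helper
lemma six_choose (n : ℕ) : (n+3).choose 3 * 6 = (n+1)*(n+2)*(n+3) := by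
  have h := Nat.choose_mul_factorial_mul_factorial (show 3 ≤ n + 3 by omega)
  have h2 : n + 3 - 3 = n := by omega
  rw [h2] at h
  have h3 : (3:ℕ).factorial = 6 := by decide
  rw [h3] at h
  have h4 : (n+3).factorial = ((n+1)*(n+2)*(n+3)) * n.factorial := by
    simp only [show n+3 = (n+2)+1 from rfl, show n+2 = (n+1)+1 from rfl, Nat.factorial_succ]
    try ring
  rw [h4] at h
  have := Nat.factorial_pos n
  have h5 : ((n+3).choose 3 * 6) * n.factorial = ((n+1)*(n+2)*(n+3)) * n.factorial := by
    rw [← h]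
  exact Nat.eq_of_mul_eq_mul_right this h5

open Finset MvPolynomial in
lemma count_type {n : ℕ} (c : Fin 4 → ℕ) (hc : ∑ i, c i = n) :
    (Finset.univ.filter fun w : Fin n → Fin 4 => typeOf w = c).card
      = Nat.multinomial Finset.univ c := by
  classical
  -- monomial form of products of powers of X
  have hmono : ∀ k : Fin 4 → ℕ,
      (∏ i, (X i : MvPolynomial (Fin 4) ℕ) ^ k i)
        = monomial (Finsupp.equivFunOnFinite.symm k) 1 := by
    intro k
    rw [← prod_X_pow_eq_monomial, ← Finset.prod_subset
      (Finset.subset_univ (Finsupp.equivFunOnFinite.symm k).support)]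
    · exact Finset.prod_congr rfl fun i _ => by simp
    · intro i _ hi
      have hk : k i = 0 := by simpa using hi
      simp [hk]
  -- product over string positions, grouped by fibers
  have htype : ∀ w : Fin n → Fin 4,
      (∏ j, (X (w j) : MvPolynomial (Fin 4) ℕ)) = ∏ i, (X i : MvPolynomial (Fin 4) ℕ) ^ typeOf w i := by
    intro w
    rw [← Finset.prod_fiberwise Finset.univ w (fun j => (X (w j) : MvPolynomial (Fin 4) ℕ))]
    refine Finset.prod_congr rfl fun i _ => ?_
    rw [show (∏ j ∈ Finset.univ.filter fun j => w j = i, (X (w j) : MvPolynomial (Fin 4) ℕ))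
        = ∏ j ∈ Finset.univ.filter fun j => w j = i, (X i : MvPolynomial (Fin 4) ℕ) from
      Finset.prod_congr rfl fun j hj => by rw [(Finset.mem_filter.mp hj).2]]
    rw [Finset.prod_const]
    rfl
  -- two expansions of (∑ X i)^n
  have key : (∑ w : Fin n → Fin 4, ∏ j, (X (w j) : MvPolynomial (Fin 4) ℕ))
      = ∑ k ∈ piAntidiag (univ : Finset (Fin 4)) n,
          (Nat.multinomial Finset.univ k : MvPolynomial (Fin 4) ℕ) * ∏ i, (X i) ^ k i := by
    rw [← Finset.sum_pow_eq_sum_piAntidiag]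
    rw [show ((∑ i, (X i : MvPolynomial (Fin 4) ℕ)) ^ n)
        = ∏ _j : Fin n, (∑ i, (X i : MvPolynomial (Fin 4) ℕ)) from by
      rw [Finset.prod_const, Finset.card_univ, Fintype.card_fin]]
    rw [Finset.prod_univ_sum]
    rw [Fintype.piFinset_univ]
  -- take the coefficient at the monomial of c
  have hcoeff := congrArg (coeff (Finsupp.equivFunOnFinite.symm c)) key
  rw [coeff_sum, coeff_sum] at hcoeff
  simp only [htype, hmono] at hcoeff
  -- LHS
  rw [show (∑ w : Fin n → Fin 4,
        coeff (Finsupp.equivFunOnFinite.symm c) (monomial (Finsupp.equivFunOnFinite.symm (typeOf w)) 1))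
      = ∑ w : Fin n → Fin 4, if typeOf w = c then 1 else 0 from
    Finset.sum_congr rfl fun w _ => by
      rw [coeff_monomial]
      simp [EmbeddingLike.apply_eq_iff_eq]] at hcoeff
  rw [Finset.sum_boole] at hcoeff
  rw [show (∑ k ∈ piAntidiag (univ : Finset (Fin 4)) n,
        coeff (Finsupp.equivFunOnFinite.symm c)
          ((Nat.multinomial Finset.univ k : MvPolynomial (Fin 4) ℕ)
            * monomial (Finsupp.equivFunOnFinite.symm k) 1))
      = ∑ k ∈ piAntidiag (univ : Finset (Fin 4)) n,
          if k = c then Nat.multinomial Finset.univ k else 0 from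
    Finset.sum_congr rfl fun k _ => by
      rw [← C_eq_coe_nat, coeff_C_mul, coeff_monomial]
      simp [EmbeddingLike.apply_eq_iff_eq]] at hcoeff
  rw [Finset.sum_ite_eq' (piAntidiag (univ : Finset (Fin 4)) n) c
    (fun k => Nat.multinomial Finset.univ k)] at hcoeff
  rw [if_pos (by simp [hc] : c ∈ piAntidiag (univ : Finset (Fin 4)) n)] at hcoeff
  simpa using hcoeff

/-- De Finetti-type decomposition (Lemma 1 ingredient): `σ^{⊗n} = p ρ_n + (1−p) ρ̃_n`
with `p = multinomial(n; n₁,…,n₄) ∏ᵢ (nᵢ/n)^{nᵢ}`, `ρ̃_n` a positive semidefinite operator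
of trace 1, and `p ≥ 1/(n+1)³` (in particular `p ≥ 1/n³` for `n ≥ 2`). -/
theorem sigma_pow_decomposition
    (n : ℕ) (c : Fin 4 → ℕ) (hn : 0 < n) (hc : ∑ i, c i = n)
    (p : ℝ) (hp : p = (Nat.multinomial Finset.univ c : ℝ) * ∏ i, ((c i : ℝ) / n) ^ (c i)) :
    ∃ ρt : Matrix (Fin n → Fin 4) (Fin n → Fin 4) ℝ,
      ρt.PosSemidef ∧ ρt.trace = 1 ∧
      sigmaPow n c = p • rhoSym n c + (1 - p) • ρt ∧
      1 / ((n : ℝ) + 1) ^ 3 ≤ p ∧ (2 ≤ n → 1 / (n : ℝ) ^ 3 ≤ p) := by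
  classical
  have hn0 : (n:ℝ) ≠ 0 := Nat.cast_ne_zero.mpr hn.ne'
  set sig : (Fin n → Fin 4) → ℝ := fun w => ∏ j, ((c (w j) : ℝ) / n) with hsig
  set rho : (Fin n → Fin 4) → ℝ := fun w =>
    if typeOf w = c then ((∏ i, (c i).factorial : ℕ) : ℝ) / (n.factorial : ℝ) else 0 with hrho
  have htype : ∀ (g : Fin 4 → ℝ) (w : Fin n → Fin 4),
      (∏ j, g (w j)) = ∏ i, g i ^ typeOf w i := by
    intro g w
    rw [← Finset.prod_fiberwise Finset.univ w (fun j => g (w j))]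
    refine Finset.prod_congr rfl fun i _ => ?_
    rw [show (∏ j ∈ Finset.univ.filter fun j => w j = i, g (w j))
        = ∏ j ∈ Finset.univ.filter fun j => w j = i, g i from
      Finset.prod_congr rfl fun j hj => by rw [(Finset.mem_filter.mp hj).2]]
    rw [Finset.prod_const]
    rfl
  have hspecN : (∏ i, (c i).factorial) * Nat.multinomial Finset.univ c = n.factorial := by
    rw [Nat.multinomial_spec, hc]
  have hfact0 : (n.factorial : ℝ) ≠ 0 := Nat.cast_ne_zero.mpr (Nat.factorial_pos n).ne'
  have hunit : (Nat.multinomial Finset.univ c : ℝ)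
      * (((∏ i, (c i).factorial : ℕ) : ℝ) / (n.factorial : ℝ)) = 1 := by
    rw [mul_div_assoc']
    rw [div_eq_one_iff_eq hfact0]
    exact_mod_cast Nat.mul_comm _ _ ▸ congrArg (Nat.cast (R := ℝ)) hspecN
  have hp0 : 0 ≤ p := by
    rw [hp]
    apply mul_nonneg (Nat.cast_nonneg _)
    exact Finset.prod_nonneg fun i _ => by positivity
  have hkey : ∀ w, typeOf w = c → sig w = p * rho w := by
    intro w hw
    have h1 : sig w = ∏ i, ((c i : ℝ)/n) ^ (c i) := by
      rw [hsig]; dsimp only; rw [htype (fun i => (c i : ℝ)/n) w, hw]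
    have h2 : rho w = ((∏ i, (c i).factorial : ℕ) : ℝ) / (n.factorial : ℝ) := by
      rw [hrho]; dsimp only; rw [if_pos hw]
    rw [h1, h2, hp]
    rw [show (Nat.multinomial Finset.univ c : ℝ) * (∏ i, ((c i : ℝ)/n) ^ (c i))
        * (((∏ i, (c i).factorial : ℕ) : ℝ) / (n.factorial : ℝ))
      = (∏ i, ((c i : ℝ)/n) ^ (c i)) * ((Nat.multinomial Finset.univ c : ℝ)
        * (((∏ i, (c i).factorial : ℕ) : ℝ) / (n.factorial : ℝ))) from by ring, hunit, mul_one]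
  have hd0 : ∀ w, 0 ≤ sig w - p * rho w := by
    intro w
    by_cases hw : typeOf w = c
    · rw [hkey w hw]; simp
    · have h0 : rho w = 0 := by rw [hrho]; dsimp only; rw [if_neg hw]
      rw [h0, mul_zero, sub_zero, hsig]
      exact Finset.prod_nonneg fun j _ => by positivity
  have hsum1 : ∑ i, ((c i : ℝ)/n) = 1 := by
    rw [← Finset.sum_div, show (∑ i, ((c i) : ℝ)) = (n:ℝ) from by exact_mod_cast congrArg (Nat.cast (R := ℝ)) hc]
    exact div_self hn0
  have hsum_sig : ∑ w, sig w = 1 := by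
    have h1 := Finset.prod_univ_sum (fun _ : Fin n => (Finset.univ : Finset (Fin 4)))
      (fun _ i => ((c i : ℝ)/n))
    rw [Fintype.piFinset_univ] at h1
    rw [hsig]
    dsimp only
    rw [← h1, Finset.prod_congr rfl fun (j : Fin n) _ => hsum1, Finset.prod_const, one_pow]
  have hsum_rho : ∑ w, rho w = 1 := by
    rw [hrho]
    dsimp only
    rw [← Finset.sum_filter, Finset.sum_const, count_type c hc, nsmul_eq_mul, hunit]
  have hsum_d : ∑ w, (sig w - p * rho w) = 1 - p := by
    rw [Finset.sum_sub_distrib, ← Finset.mul_sum, hsum_sig, hsum_rho, mul_one]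
  have hple : p ≤ 1 := by
    have h := Finset.sum_nonneg (fun w (_ : w ∈ Finset.univ) => hd0 w)
    rw [hsum_d] at h
    linarith
  -- the probability bounds
  have hprodform : ∀ k : Fin 4 → ℕ, (∑ i, k i) = n →
      (∏ i, ((c i : ℝ)/n) ^ (k i)) = ((∏ i, (c i)^(k i) : ℕ) : ℝ) / (n:ℝ)^n := by
    intro k hk
    push_cast
    simp only [div_pow]
    rw [Finset.prod_div_distrib, Finset.prod_pow_eq_pow_sum, hk]
  have hqle : ∀ k ∈ Finset.piAntidiag (Finset.univ : Finset (Fin 4)) n,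
      (Nat.multinomial Finset.univ k : ℝ) * ∏ i, ((c i : ℝ)/n) ^ (k i) ≤ p := by
    intro k hk
    have hksum : ∑ i, k i = n := ((Finset.mem_piAntidiag).mp hk).1
    have hspecK : (∏ i, (k i).factorial) * Nat.multinomial Finset.univ k = n.factorial := by
      rw [Nat.multinomial_spec, hksum]
    have hprodle : (∏ i, ((c i).factorial * (c i) ^ (k i)))
        ≤ ∏ i, ((k i).factorial * (c i) ^ (c i)) :=
      Finset.prod_le_prod (fun i _ => Nat.zero_le _) (fun i _ => fact_pow_le (c i) (k i))
    have hM : 0 < (∏ i, (c i).factorial) * (∏ i, (k i).factorial) :=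
      Nat.mul_pos (Finset.prod_pos fun i _ => Nat.factorial_pos _)
        (Finset.prod_pos fun i _ => Nat.factorial_pos _)
    have hnat : Nat.multinomial Finset.univ k * ∏ i, (c i)^(k i)
        ≤ Nat.multinomial Finset.univ c * ∏ i, (c i)^(c i) := by
      apply Nat.le_of_mul_le_mul_right _ hM
      calc (Nat.multinomial Finset.univ k * ∏ i, (c i)^(k i))
            * ((∏ i, (c i).factorial) * (∏ i, (k i).factorial))
          = n.factorial * (∏ i, ((c i).factorial * (c i)^(k i))) := by
            rw [Finset.prod_mul_distrib, ← hspecK]; ring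
        _ ≤ n.factorial * (∏ i, ((k i).factorial * (c i)^(c i))) := Nat.mul_le_mul_left _ hprodle
        _ = (Nat.multinomial Finset.univ c * ∏ i, (c i)^(c i))
            * ((∏ i, (c i).factorial) * (∏ i, (k i).factorial)) := by
            rw [Finset.prod_mul_distrib, ← hspecN]; ring
    rw [hprodform k hksum, hp, hprodform c hc, mul_div_assoc', mul_div_assoc']
    apply div_le_div_of_nonneg_right ?_ (by positivity)
    exact_mod_cast hnat
  have hsum_q : ∑ k ∈ Finset.piAntidiag (Finset.univ : Finset (Fin 4)) n,
      (Nat.multinomial Finset.univ k : ℝ) * ∏ i, ((c i : ℝ)/n) ^ (k i) = 1 := by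
    rw [← Finset.sum_pow_eq_sum_piAntidiag Finset.univ (fun i => (c i : ℝ)/n) n, hsum1, one_pow]
  have hcardT : (Finset.piAntidiag (Finset.univ : Finset (Fin 4)) n).card = (n+3).choose 3 := by
    rw [← Finset.map_sym_eq_piAntidiag, Finset.card_map, Finset.sym_univ, Finset.card_univ,
      Sym.card_sym_eq_choose, Fintype.card_fin]
    have h := Nat.choose_symm (show 3 ≤ n+3 by omega)
    rw [show n+3-3 = n by omega] at h
    rw [show 4 + n - 1 = n + 3 by omega, h]
  have hTp : (1:ℝ) ≤ ((n+3).choose 3 : ℝ) * p := by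
    have h := Finset.sum_le_card_nsmul (Finset.piAntidiag (Finset.univ : Finset (Fin 4)) n)
      _ p hqle
    rw [hsum_q, hcardT, nsmul_eq_mul] at h
    exact h
  have hb1 : 1 / ((n : ℝ) + 1) ^ 3 ≤ p := by
    have hch : ((n+3).choose 3 : ℝ) ≤ ((n:ℝ)+1)^3 := by
      have h1 : (n+3).choose 3 ≤ (n+1)^3 := by nlinarith [six_choose n]
      calc ((n+3).choose 3 : ℝ) ≤ (((n+1)^3 : ℕ) : ℝ) := by exact_mod_cast h1
        _ = ((n:ℝ)+1)^3 := by push_cast; ring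
    rw [div_le_iff₀ (by positivity)]
    calc (1:ℝ) ≤ ((n+3).choose 3 : ℝ) * p := hTp
      _ ≤ ((n:ℝ)+1)^3 * p := mul_le_mul_of_nonneg_right hch hp0
      _ = p * ((n:ℝ)+1)^3 := by ring
  have hb2 : 2 ≤ n → 1 / (n : ℝ) ^ 3 ≤ p := by
    intro h2n
    by_cases h3 : 3 ≤ n
    · have hch : ((n+3).choose 3 : ℝ) ≤ (n:ℝ)^3 := by
        have h1 : (n+3).choose 3 ≤ n^3 := by
          obtain ⟨m, rfl⟩ := Nat.exists_eq_add_of_le h3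
          have hkey : (3+m+1)*(3+m+2)*(3+m+3) ≤ 6*(3+m)^3 := by nlinarith [m.zero_le, sq_nonneg m]
          have h6 := six_choose (3+m)
          exact Nat.le_of_mul_le_mul_left (by omega : 6 * ((3+m+3).choose 3) ≤ 6 * (3+m)^3) (by norm_num)
        calc ((n+3).choose 3 : ℝ) ≤ ((n^3 : ℕ) : ℝ) := by exact_mod_cast h1
          _ = (n:ℝ)^3 := by push_cast; ring
      rw [div_le_iff₀ (by positivity)]
      calc (1:ℝ) ≤ ((n+3).choose 3 : ℝ) * p := hTp
        _ ≤ (n:ℝ)^3 * p := mul_le_mul_of_nonneg_right hch hp0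
        _ = p * (n:ℝ)^3 := by ring
    · have hn2 : n = 2 := by omega
      subst hn2
      have hnum : 1 ≤ Nat.multinomial Finset.univ c * ∏ i, (c i)^(c i) := by
        refine Nat.one_le_iff_ne_zero.mpr (Nat.mul_pos (Nat.multinomial_pos _ _)
          (Finset.prod_pos fun i _ => ?_)).ne'
        rcases Nat.eq_zero_or_pos (c i) with h | h
        · rw [h]; norm_num
        · exact pow_pos h _
      have hnumR : (1:ℝ) ≤ ((Nat.multinomial Finset.univ c * ∏ i, (c i)^(c i) : ℕ) : ℝ) := by
        exact_mod_cast hnum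
      rw [hp, hprodform c hc, mul_div_assoc']
      rw [show (Nat.multinomial Finset.univ c : ℝ) * ((∏ i, (c i)^(c i) : ℕ) : ℝ)
          = ((Nat.multinomial Finset.univ c * ∏ i, (c i)^(c i) : ℕ) : ℝ) from by push_cast; ring]
      rw [div_le_div_iff₀ (by norm_num) (by positivity)]
      push_cast at hnumR
      norm_num
      nlinarith [hnumR]
  -- the matrix decomposition
  have hsig_eq : sigmaPow n c = Matrix.diagonal sig := rfl
  have hrho_eq : rhoSym n c = Matrix.diagonal rho := rfl
  by_cases hp1 : p = 1
  · refine ⟨rhoSym n c, ?_, ?_, ?_, hb1, hb2⟩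
    · rw [hrho_eq]
      refine Matrix.PosSemidef.diagonal fun w => ?_
      simp only [Pi.zero_apply, hrho]
      by_cases hw : typeOf w = c
      · rw [if_pos hw]; positivity
      · rw [if_neg hw]
    · rw [hrho_eq, Matrix.trace_diagonal]
      exact hsum_rho
    · have hzero : ∀ w, sig w - p * rho w = 0 := by
        intro w
        refine (Finset.sum_eq_zero_iff_of_nonneg fun x (_ : x ∈ Finset.univ) => hd0 x).mp ?_ w
          (Finset.mem_univ w)
        rw [hsum_d, hp1, sub_self]
      rw [hsig_eq, hrho_eq, hp1]
      rw [sub_self, zero_smul, add_zero, one_smul]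
      exact congrArg Matrix.diagonal (funext fun w => sub_eq_zero.mp
        (by have h := hzero w; rwa [hp1, one_mul] at h))
  · have h1p : (1:ℝ) - p ≠ 0 := sub_ne_zero.mpr (fun h => hp1 h.symm)
    have h1p0 : (0:ℝ) ≤ 1 - p := by linarith
    refine ⟨Matrix.diagonal (fun w => (1-p)⁻¹ * (sig w - p * rho w)), ?_, ?_, ?_, hb1, hb2⟩
    · refine Matrix.PosSemidef.diagonal fun w => ?_
      simp only [Pi.zero_apply]
      exact mul_nonneg (inv_nonneg.mpr h1p0) (hd0 w)
    · rw [Matrix.trace_diagonal, ← Finset.mul_sum, hsum_d, inv_mul_cancel₀ h1p]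
    · rw [hsig_eq, hrho_eq]
      rw [show p • Matrix.diagonal rho = Matrix.diagonal (p • rho) from
        (Matrix.diagonal_smul p rho).symm]
      rw [show (1-p) • Matrix.diagonal (fun w => (1-p)⁻¹ * (sig w - p * rho w))
          = Matrix.diagonal ((1-p) • fun w => (1-p)⁻¹ * (sig w - p * rho w)) from
        (Matrix.diagonal_smul _ _).symm]
      rw [Matrix.diagonal_add]
      refine congrArg Matrix.diagonal (funext fun w => ?_)
      simp only [Pi.add_apply, Pi.smul_apply, smul_eq_mul]
      rw [← mul_assoc (1-p), mul_inv_cancel₀ h1p, one_mul]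
      ring
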